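/- arXiv:2111.07761 — 2 statements merged into one kernel-verified Lean document; each statement's English description precedes it below -/
import Mathlib

section
/- Single-linkage hierarchical clustering of a finite set L with dissimilarity c produces the subdominant ultrametric d*: d* is an ultrametric with d* ≤ c pointwise, and for every ultrametric d with d ≤ c pointwise, d ≤ d* pointwise. Equivalently, d*(x,y) = min over paths x = z₀, z₁, …, z_k = y in L of max_i c(z_{i−1}, z_i). -/
open scoped Classical

/-- `d` is an ultrametric: non-negative, zero on the diagonal, symmetric, and satisfying
the strong triangle inequality `d(x,y) ≤ max (d(x,z)) (d(y,z))`. -/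
def IsUltra {L : Type} (d : L → L → ℝ) : Prop :=
  (∀ x y, 0 ≤ d x y) ∧ (∀ x, d x x = 0) ∧ (∀ x y, d x y = d y x) ∧
    ∀ x y z, d x y ≤ max (d x z) (d y z)

/-- The subdominant ultrametric to `c`: the pointwise supremum of all ultrametrics bounded
above by `c`. -/
noncomputable def subdom {L : Type} (c : L → L → ℝ) (x y : L) : ℝ :=
  sSup {r : ℝ | ∃ d : L → L → ℝ, IsUltra d ∧ (∀ a b, d a b ≤ c a b) ∧ r = d x y}

/-- The single-linkage (minimax path) distance: the minimum over all paths
`x = z₀, z₁, …, z_k = y` in `L` of the maximal cost `c(z_{i−1}, z_i)` of a step. -/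
noncomputable def slDist {L : Type} (c : L → L → ℝ) (x y : L) : ℝ :=
  sInf {r : ℝ | ∃ p : List L, p.head? = some x ∧ p.getLast? = some y ∧
    r = ((p.zip p.tail).map fun q => c q.1 q.2).foldr max 0}

namespace SLAux


variable {L : Type} (c : L → L → ℝ)

/-- cost of a path -/
def cost (p : List L) : ℝ := ((p.zip p.tail).map fun q => c q.1 q.2).foldr max 0

@[simp] lemma cost_nil : cost c ([] : List L) = 0 := rfl
@[simp] lemma cost_single (a : L) : cost c [a] = 0 := rfl
@[simp] lemma cost_cons_cons (a b : L) (l : List L) :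
    cost c (a :: b :: l) = max (c a b) (cost c (b :: l)) := rfl

lemma cost_nonneg : ∀ p : List L, 0 ≤ cost c p
  | [] => le_refl 0
  | [_] => le_refl 0
  | _ :: b :: l => le_max_of_le_right (cost_nonneg (b :: l))

lemma cost_append : ∀ (p : List L) (a : L) (q : List L),
    cost c (p ++ a :: q) = max (cost c (p ++ [a])) (cost c (a :: q))
  | [], a, q => by
      simp [max_eq_right (cost_nonneg c (a :: q))]
  | [b], a, q => by
      simp only [List.cons_append, List.nil_append, cost_cons_cons, cost_single]
      rw [max_assoc, max_eq_right (cost_nonneg c (a :: q))]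
  | b :: d :: p', a, q => by
      have ih := cost_append (d :: p') a q
      simp only [List.cons_append, cost_cons_cons] at *
      rw [ih, max_assoc]

lemma cost_reverse (hsymm : ∀ x y, c x y = c y x) :
    ∀ p : List L, cost c p.reverse = cost c p
  | [] => rfl
  | [_] => rfl
  | a :: d :: p' => by
      have ih := cost_reverse hsymm (d :: p')
      rw [List.reverse_cons]
      have h2 : (d :: p').reverse = p'.reverse ++ [d] := List.reverse_cons (a := d) (as := p')
      rw [h2, List.append_assoc]
      have : ([d] ++ [a] : List L) = d :: [a] := rfl
      rw [this, cost_append, ← h2, ih]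
      simp only [cost_cons_cons, cost_single]
      rw [← max_assoc, max_eq_left (le_max_of_le_left (cost_nonneg c (d :: p'))),
        hsymm d a, max_comm]

lemma ultra_le_cost (d : L → L → ℝ) (hd : IsUltra d) (hdc : ∀ a b, d a b ≤ c a b) :
    ∀ (p : List L) (x y : L), p.head? = some x → p.getLast? = some y → d x y ≤ cost c p
  | [], x, y, hx, _ => by simp at hx
  | [a], x, y, hx, hy => by
      simp only [List.head?_cons, Option.some.injEq] at hx
      simp only [List.getLast?_singleton, Option.some.injEq] at hy
      subst hx; subst hy
      rw [cost_single]
      exact le_of_eq (hd.2.1 _)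
  | a :: b :: l, x, y, hx, hy => by
      have hax : a = x := by simpa using hx
      subst hax
      rw [List.getLast?_cons_cons] at hy
      have ih := ultra_le_cost d hd hdc (b :: l) b y rfl hy
      have h1 : d a y ≤ max (d a b) (d y b) := hd.2.2.2 a y b
      have h2 : d a b ≤ c a b := hdc a b
      have h3 : d y b ≤ cost c (b :: l) := by rw [hd.2.2.1 y b]; exact ih
      rw [cost_cons_cons]
      exact h1.trans (max_le_max h2 h3)

lemma foldr_max_mem : ∀ l : List ℝ, l.foldr max 0 = 0 ∨ l.foldr max 0 ∈ l
  | [] => Or.inl rfl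
  | a :: l => by
      rcases max_choice a (l.foldr max 0) with h | h
      · right; rw [List.foldr_cons, h]; exact List.mem_cons_self (a := a) (l := l)
      · rcases foldr_max_mem l with h' | h'
        · left; rw [List.foldr_cons, h, h']
        · right; rw [List.foldr_cons, h]; exact List.mem_cons_of_mem a h'


end SLAux

/-- Single-linkage hierarchical clustering of a finite set `L` with
dissimilarity `c` produces the subdominant ultrametric: the minimax path distance `slDist c`
is an ultrametric, is bounded above by `c`, dominates every ultrametric bounded above by
`c`, and coincides with the subdominant ultrametric `d*`. -/
theorem single_linkage_subdominant {L : Type} [Fintype L]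
    (c : L → L → ℝ) (hsymm : ∀ x y, c x y = c y x) (hnn : ∀ x y, 0 ≤ c x y)
    (hzero : ∀ x, c x x = 0) :
    IsUltra (slDist c) ∧ (∀ x y, slDist c x y ≤ c x y) ∧
      (∀ d : L → L → ℝ, IsUltra d → (∀ a b, d a b ≤ c a b) →
        ∀ x y, d x y ≤ slDist c x y) ∧
      (∀ x y, slDist c x y = subdom c x y) := by
  classical
  set S : L → L → Set ℝ := fun x y =>
    {r : ℝ | ∃ p : List L, p.head? = some x ∧ p.getLast? = some y ∧
      r = SLAux.cost c p} with hSdef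
  have hslS : ∀ x y, slDist c x y = sInf (S x y) := fun x y => rfl
  have hfin : ∀ x y, (S x y).Finite := by
    intro x y
    apply Set.Finite.subset
      ((Set.finite_range (fun q : L × L => c q.1 q.2)).insert 0)
    rintro r ⟨p, -, -, rfl⟩
    rcases SLAux.foldr_max_mem ((p.zip p.tail).map fun q => c q.1 q.2) with h | h
    · exact Or.inl h
    · rcases List.mem_map.1 h with ⟨q, -, hq⟩
      exact Or.inr ⟨q, hq⟩
  have hne : ∀ x y, (S x y).Nonempty := by
    intro x y
    exact ⟨SLAux.cost c [x, y], [x, y], rfl, by simp, rfl⟩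
  have hlb : ∀ x y, ∀ r ∈ S x y, (0:ℝ) ≤ r := by
    rintro x y r ⟨p, -, -, rfl⟩
    exact SLAux.cost_nonneg c p
  have hbdd : ∀ x y, BddBelow (S x y) := fun x y => ⟨0, hlb x y⟩
  have hmin : ∀ x y, sInf (S x y) ∈ S x y := fun x y => (hne x y).csInf_mem (hfin x y)
  have hnonneg : ∀ x y, 0 ≤ slDist c x y := by
    intro x y; rw [hslS]; exact le_csInf (hne x y) (hlb x y)
  have hdiag : ∀ x, slDist c x x = 0 := by
    intro x
    refine le_antisymm ?_ (hnonneg x x)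
    rw [hslS]
    exact csInf_le (hbdd x x) ⟨[x], rfl, rfl, rfl⟩
  have hSsymm : ∀ x y, S x y = S y x := by
    intro x y
    have key : ∀ a b : L, S a b ⊆ S b a := by
      rintro a b r ⟨p, hx, hy, rfl⟩
      refine ⟨p.reverse, ?_, ?_, ?_⟩
      · rw [List.head?_reverse]; exact hy
      · rw [List.getLast?_reverse]; exact hx
      · exact (SLAux.cost_reverse c hsymm p).symm
    exact le_antisymm (key x y) (key y x)
  have hsym : ∀ x y, slDist c x y = slDist c y x := by
    intro x y; rw [hslS, hslS, hSsymm]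
  have hultra : ∀ x y z, slDist c x y ≤ max (slDist c x z) (slDist c y z) := by
    intro x y z
    obtain ⟨p, hpx, hpz, hpc⟩ := hmin x z
    obtain ⟨q, hqy, hqz, hqc⟩ := hmin y z
    -- reverse q : path from z to y
    obtain ⟨p₀, rfl⟩ := List.getLast?_eq_some_iff.1 hpz
    have hq'x : q.reverse.head? = some z := by rw [List.head?_reverse]; exact hqz
    have hq'y : q.reverse.getLast? = some y := by rw [List.getLast?_reverse]; exact hqy
    obtain ⟨t, ht⟩ : ∃ t, q.reverse = z :: t := by
      cases hq : q.reverse with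
      | nil => rw [hq] at hq'x; simp at hq'x
      | cons z' t =>
        rw [hq] at hq'x
        simp only [List.head?_cons, Option.some.injEq] at hq'x
        exact ⟨t, by rw [hq'x]⟩
    set P : List L := (p₀ ++ [z]) ++ z :: t with hP
    have hcostP : SLAux.cost c P = max (SLAux.cost c (p₀ ++ [z])) (SLAux.cost c (z :: t)) := by
      rw [hP, SLAux.cost_append]
      congr 1
      rw [List.append_assoc]
      show SLAux.cost c (p₀ ++ z :: [z]) = SLAux.cost c (p₀ ++ [z])
      rw [SLAux.cost_append]
      have : SLAux.cost c [z, z] = 0 := by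
        simp [hzero z]
      rw [this, max_eq_left (SLAux.cost_nonneg c _)]
    have hcostq : SLAux.cost c (z :: t) = SLAux.cost c q := by
      rw [← ht, SLAux.cost_reverse c hsymm]
    have hPx : P.head? = some x := by
      rw [hP, List.head?_append_of_ne_nil _ (by simp)]
      exact hpx
    have hPy : P.getLast? = some y := by
      rw [hP, List.getLast?_append]
      rw [← ht, hq'y]
      rfl
    have hmem : SLAux.cost c P ∈ S x y := ⟨P, hPx, hPy, rfl⟩
    calc slDist c x y ≤ SLAux.cost c P := by rw [hslS]; exact csInf_le (hbdd x y) hmem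
      _ = max (slDist c x z) (slDist c y z) := by
          rw [hcostP, hcostq, hslS, hslS, hpc, hqc]
  have hlec : ∀ x y, slDist c x y ≤ c x y := by
    intro x y
    rw [hslS]
    exact csInf_le (hbdd x y) ⟨[x, y], rfl, by simp, by
      show c x y = max (c x y) 0
      exact (max_eq_left (hnn x y)).symm⟩
  have hdom : ∀ d : L → L → ℝ, IsUltra d → (∀ a b, d a b ≤ c a b) →
      ∀ x y, d x y ≤ slDist c x y := by
    intro d hd hdc x y
    rw [hslS]
    refine le_csInf (hne x y) ?_
    rintro r ⟨p, hx, hy, rfl⟩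
    exact SLAux.ultra_le_cost c d hd hdc p x y hx hy
  have hIsUltra : IsUltra (slDist c) := ⟨hnonneg, hdiag, hsym, hultra⟩
  refine ⟨hIsUltra, hlec, hdom, ?_⟩
  intro x y
  have h1 : slDist c x y ∈
      {r : ℝ | ∃ d : L → L → ℝ, IsUltra d ∧ (∀ a b, d a b ≤ c a b) ∧ r = d x y} :=
    ⟨slDist c, hIsUltra, hlec, rfl⟩
  have hub : ∀ r ∈ {r : ℝ | ∃ d : L → L → ℝ, IsUltra d ∧ (∀ a b, d a b ≤ c a b) ∧ r = d x y},
      r ≤ slDist c x y := by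
    rintro r ⟨d, hd, hdc, rfl⟩
    exact hdom d hd hdc x y
  exact le_antisymm (le_csSup ⟨slDist c x y, hub⟩ h1) (csSup_le ⟨_, h1⟩ hub)
end

section
/- For any two graphs G and H and non-negative edit costs, DLB(G,H) = (c_e/2) · ‖φ(G) − φ(H)‖₁ where φ(G) ∈ ℝ^Δ is the vector whose k-th entry (1 ≤ k ≤ Δ) is the number of vertices of G with degree ≥ k. -/
open scoped Classical

/-- A labeled graph: finite vertex set (of natural-number names), finite loop-free edge set,
vertex and edge labeling functions. -/
structure LGraph (Lv Le : Type) where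
  verts : Finset ℕ
  edges : Finset (Sym2 ℕ)
  vl : ℕ → Lv
  el : Sym2 ℕ → Le

namespace LGraph

variable {Lv Le : Type}

/-- Well-formedness: edges are loop-free and their endpoints are vertices. -/
def WF (G : LGraph Lv Le) : Prop :=
  (∀ e ∈ G.edges, ¬ e.IsDiag) ∧ ∀ e ∈ G.edges, ∀ v ∈ e, v ∈ G.verts

/-- The degree of a vertex: the number of incident edges. -/
noncomputable def degree (G : LGraph Lv Le) (v : ℕ) : ℕ :=
  (G.edges.filter fun e => v ∈ e).card

/-- Edit operations: insert/delete/relabel a vertex, insert/delete/relabel an edge. -/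
inductive Op (Lv Le : Type) where
  | addV (v : ℕ) (l : Lv)
  | delV (v : ℕ)
  | relV (v : ℕ) (l : Lv)
  | addE (u v : ℕ) (l : Le)
  | delE (e : Sym2 ℕ)
  | relE (e : Sym2 ℕ) (l : Le)

/-- Applying an edit operation to a graph; `none` if the operation is invalid
(e.g. deleting a non-isolated vertex). -/
noncomputable def apply (o : Op Lv Le) (G : LGraph Lv Le) : Option (LGraph Lv Le) :=
  match o with
  | .addV v l => if v ∈ G.verts then none else
      some ⟨insert v G.verts, G.edges, Function.update G.vl v l, G.el⟩
  | .delV v => if v ∈ G.verts ∧ ∀ e ∈ G.edges, v ∉ e then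
      some ⟨G.verts.erase v, G.edges, G.vl, G.el⟩ else none
  | .relV v l => if v ∈ G.verts then
      some ⟨G.verts, G.edges, Function.update G.vl v l, G.el⟩ else none
  | .addE u v l => if u ∈ G.verts ∧ v ∈ G.verts ∧ u ≠ v ∧ s(u, v) ∉ G.edges then
      some ⟨G.verts, insert s(u, v) G.edges, G.vl, Function.update G.el s(u, v) l⟩ else none
  | .delE e => if e ∈ G.edges then
      some ⟨G.verts, G.edges.erase e, G.vl, G.el⟩ else none
  | .relE e l => if e ∈ G.edges then
      some ⟨G.verts, G.edges, G.vl, Function.update G.el e l⟩ else none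

/-- Applying a sequence of edit operations (an edit path). -/
noncomputable def applyList : List (Op Lv Le) → LGraph Lv Le → Option (LGraph Lv Le)
  | [], G => some G
  | o :: os, G => (apply o G).bind (applyList os)

/-- Cost of a single edit operation, with vertex insertion/deletion cost `cv`, vertex
relabeling cost `cvl`, edge insertion/deletion cost `ce` and edge relabeling cost `cel`. -/
def opCost (cv cvl ce cel : ℝ) : Op Lv Le → ℝ
  | .addV _ _ => cv
  | .delV _ => cv
  | .relV _ _ => cvl
  | .addE _ _ _ => ce
  | .delE _ => ce
  | .relE _ _ => cel

/-- Graph isomorphism: a bijection of the vertex sets preserving labels, adjacency and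
edge labels. -/
def Iso (G H : LGraph Lv Le) : Prop :=
  ∃ f : ℕ → ℕ, Set.BijOn f ↑G.verts ↑H.verts ∧
    (∀ v ∈ G.verts, H.vl (f v) = G.vl v) ∧
    (∀ u ∈ G.verts, ∀ v ∈ G.verts, (s(u, v) ∈ G.edges ↔ s(f u, f v) ∈ H.edges)) ∧
    (∀ u ∈ G.verts, ∀ v ∈ G.verts, s(u, v) ∈ G.edges → H.el s(f u, f v) = G.el s(u, v))

/-- The graph edit distance: the infimum of the total cost over all edit paths
transforming `G` into a graph isomorphic to `H`. -/
noncomputable def GED (cv cvl ce cel : ℝ) (G H : LGraph Lv Le) : ℝ :=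
  sInf {r | ∃ (ops : List (Op Lv Le)) (H' : LGraph Lv Le),
    applyList ops G = some H' ∧ Iso H' H ∧ r = (ops.map (opCost cv cvl ce cel)).sum}

/-- The vertex set of `G` padded with one dummy vertex (`Sum.inr`) for every vertex
of `H`, so that the padded vertex sets of `G` and `H` have equal cardinality. -/
abbrev PadV (G H : LGraph Lv Le) : Type := {x // x ∈ G.verts} ⊕ {x // x ∈ H.verts}

/-- Ground cost `c_llb`: 0 for equal labels or two dummies, `cvl` for distinct labels,
`cv` for matching a vertex with a dummy. -/
noncomputable def cllb (cv cvl : ℝ) (G H : LGraph Lv Le) : PadV G H → PadV H G → ℝ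
  | .inl u, .inl v => if G.vl u.1 = H.vl v.1 then 0 else cvl
  | .inl _, .inr _ => cv
  | .inr _, .inl _ => cv
  | .inr _, .inr _ => 0

/-- Degree of a padded vertex; dummies have degree 0. -/
noncomputable def padDeg (G H : LGraph Lv Le) : PadV G H → ℕ
  | .inl u => G.degree u.1
  | .inr _ => 0

/-- Ground cost `c_dlb(u,v) = (ce/2)·|δ(u) − δ(v)|`. -/
noncomputable def cdlb (ce : ℝ) (G H : LGraph Lv Le) (x : PadV G H) (y : PadV H G) : ℝ :=
  ce / 2 * |(padDeg G H x : ℝ) - (padDeg H G y : ℝ)|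

/-- Optimal assignment cost between the padded vertex sets of `G` and `H` under a ground
cost `c`: the minimum over all bijections `f` of `∑ x, c x (f x)`. -/
noncomputable def oaCost (G H : LGraph Lv Le) (c : PadV G H → PadV H G → ℝ) : ℝ :=
  sInf {r | ∃ f : PadV G H ≃ PadV H G, r = ∑ x, c x (f x)}

/-- The label lower bound. -/
noncomputable def LLB (cv cvl : ℝ) (G H : LGraph Lv Le) : ℝ :=
  oaCost G H (cllb cv cvl G H)

/-- The degree lower bound. -/
noncomputable def DLB (ce : ℝ) (G H : LGraph Lv Le) : ℝ :=
  oaCost G H (cdlb ce G H)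

/-- The combined lower bound `CLB = LLB + DLB`. -/
noncomputable def CLB (cv cvl ce : ℝ) (G H : LGraph Lv Le) : ℝ :=
  LLB cv cvl G H + DLB ce G H

end LGraph

lemma aux_sum_ind (c M : ℕ) (hc : c ≤ M) :
    ∑ k ∈ Finset.Icc 1 M, (if k ≤ c then (1:ℝ) else 0) = c := by
  rw [Finset.sum_boole]
  congr 1
  have : (Finset.Icc 1 M).filter (fun k => k ≤ c) = Finset.Icc 1 c := by
    ext k; simp [Finset.mem_Icc, Finset.mem_filter]; omega
  rw [this, Nat.card_Icc]; omega

lemma layer_cake (a b M : ℕ) (ha : a ≤ M) (hb : b ≤ M) :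
    |(a:ℝ) - b| = ∑ k ∈ Finset.Icc 1 M,
      |(if k ≤ a then (1:ℝ) else 0) - (if k ≤ b then 1 else 0)| := by
  wlog hab : a ≤ b generalizing a b
  · rw [abs_sub_comm, this b a hb ha (le_of_not_ge hab)]
    exact Finset.sum_congr rfl fun k _ => (abs_sub_comm _ _)
  have hterm : ∀ k ∈ Finset.Icc 1 M,
      |(if k ≤ a then (1:ℝ) else 0) - (if k ≤ b then 1 else 0)|
      = (if k ≤ b then (1:ℝ) else 0) - (if k ≤ a then 1 else 0) := by
    intro k _
    by_cases hk : k ≤ a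
    · simp [hk, hk.trans hab]
    · by_cases hk' : k ≤ b <;> simp [hk, hk']
  rw [Finset.sum_congr rfl hterm, Finset.sum_sub_distrib,
    aux_sum_ind a M ha, aux_sum_ind b M hb]
  have : (a:ℝ) ≤ b := by exact_mod_cast hab
  rw [abs_of_nonpos (by linarith)]; ring

lemma ind_abs_sum {n : ℕ} (p q : Fin n → Prop) [DecidablePred p] [DecidablePred q]
    (h : ∀ i, p i → q i) :
    ∑ i, |(if p i then (1:ℝ) else 0) - (if q i then 1 else 0)|
      = |(∑ i, (if p i then (1:ℝ) else 0)) - ∑ i, (if q i then (1:ℝ) else 0)| := by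
  have h1 : ∀ i : Fin n, |(if p i then (1:ℝ) else 0) - (if q i then 1 else 0)|
      = (if q i then (1:ℝ) else 0) - (if p i then 1 else 0) := by
    intro i
    by_cases hp : p i
    · simp [hp, h i hp]
    · by_cases hq : q i <;> simp [hp, hq]
  have h2 : (∑ i, (if p i then (1:ℝ) else 0)) ≤ ∑ i, (if q i then (1:ℝ) else 0) := by
    apply Finset.sum_le_sum
    intro i _
    by_cases hp : p i
    · simp [hp, h i hp]
    · by_cases hq : q i <;> simp [hp, hq]
  rw [Finset.sum_congr rfl (fun i _ => h1 i), Finset.sum_sub_distrib,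
    abs_of_nonpos (by linarith)]
  ring

lemma compare_upper {n : ℕ} (a b : Fin n → ℕ) (ha : Monotone a) (hb : Monotone b) (k : ℕ) :
    (∀ i, k ≤ a i → k ≤ b i) ∨ (∀ i, k ≤ b i → k ≤ a i) := by
  by_contra hcon
  push_neg at hcon
  obtain ⟨⟨i, hai, hbi⟩, ⟨j, hbj, haj⟩⟩ := hcon
  rcases le_total i j with hij | hij
  · exact absurd (hai.trans (ha hij)) (by omega)
  · exact absurd (hbj.trans (hb hij)) (by omega)

lemma exists_mono_equiv {α : Type*} [Fintype α] {n : ℕ} (h : Fintype.card α = n)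
    (d : α → ℕ) : ∃ e : Fin n ≃ α, Monotone (d ∘ e) := by
  let e0 : Fin n ≃ α := (Fintype.equivFinOfCardEq h).symm
  refine ⟨(Tuple.sort (d ∘ e0) : Fin n ≃ Fin n).trans e0, ?_⟩
  exact Tuple.monotone_sort (d ∘ e0)


open LGraph in
/-- For any two graphs `G` and `H` and non-negative edit costs,
`DLB(G,H) = (ce/2)·‖φ(G) − φ(H)‖₁`, where `φ(G) ∈ ℝ^Δ` is the vector whose `k`-th entry
(`1 ≤ k ≤ Δ`, `Δ` the maximum degree over `G` and `H`) is the number of vertices of `G`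
with degree at least `k`. -/
theorem dlb_eq_l1_of_degree_embedding {Lv Le : Type} (ce : ℝ) (hce : 0 ≤ ce)
    (G H : LGraph Lv Le) (hG : G.WF) (hH : H.WF) :
    DLB ce G H =
      ce / 2 * ∑ k ∈ Finset.Icc 1 ((G.verts.sup G.degree) ⊔ (H.verts.sup H.degree)),
        |((G.verts.filter fun v => k ≤ G.degree v).card : ℝ)
          - ((H.verts.filter fun v => k ≤ H.degree v).card : ℝ)| := by
  classical
  set M := (G.verts.sup G.degree) ⊔ (H.verts.sup H.degree) with hMdef
  have hbG : ∀ x : PadV G H, padDeg G H x ≤ M := by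
    rintro (u | v)
    · exact le_trans (show G.degree u.1 ≤ G.verts.sup G.degree from Finset.le_sup u.2) le_sup_left
    · exact Nat.zero_le M
  have hbH : ∀ x : PadV H G, padDeg H G x ≤ M := by
    rintro (u | v)
    · exact le_trans (show H.degree u.1 ≤ H.verts.sup H.degree from Finset.le_sup u.2) le_sup_right
    · exact Nat.zero_le M
  have hsG : ∀ k, 1 ≤ k →
      ∑ x : PadV G H, (if k ≤ padDeg G H x then (1:ℝ) else 0)
        = ((G.verts.filter fun v => k ≤ G.degree v).card : ℝ) := by
    intro k hk
    rw [Fintype.sum_sum_type]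
    have h2 : ∑ v : {x // x ∈ H.verts},
        (if k ≤ padDeg G H (Sum.inr v) then (1:ℝ) else 0) = 0 := by
      apply Finset.sum_eq_zero; intro v _
      have : ¬ (k ≤ padDeg G H (Sum.inr v)) := by simp [padDeg]; omega
      rw [if_neg this]
    rw [h2, add_zero]
    have h1 : ∀ u : {x // x ∈ G.verts},
        (if k ≤ padDeg G H (Sum.inl u) then (1:ℝ) else 0)
          = (if k ≤ G.degree u.1 then (1:ℝ) else 0) := fun u => rfl
    rw [Finset.sum_congr rfl (fun u _ => h1 u),
      Finset.sum_coe_sort G.verts (fun v => if k ≤ G.degree v then (1:ℝ) else 0),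
      Finset.sum_boole]
  have hsH : ∀ k, 1 ≤ k →
      ∑ x : PadV H G, (if k ≤ padDeg H G x then (1:ℝ) else 0)
        = ((H.verts.filter fun v => k ≤ H.degree v).card : ℝ) := by
    intro k hk
    rw [Fintype.sum_sum_type]
    have h2 : ∑ v : {x // x ∈ G.verts},
        (if k ≤ padDeg H G (Sum.inr v) then (1:ℝ) else 0) = 0 := by
      apply Finset.sum_eq_zero; intro v _
      have : ¬ (k ≤ padDeg H G (Sum.inr v)) := by simp [padDeg]; omega
      rw [if_neg this]
    rw [h2, add_zero]
    have h1 : ∀ u : {x // x ∈ H.verts},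
        (if k ≤ padDeg H G (Sum.inl u) then (1:ℝ) else 0)
          = (if k ≤ H.degree u.1 then (1:ℝ) else 0) := fun u => rfl
    rw [Finset.sum_congr rfl (fun u _ => h1 u),
      Finset.sum_coe_sort H.verts (fun v => if k ≤ H.degree v then (1:ℝ) else 0),
      Finset.sum_boole]
  set R : ℝ := ce / 2 * ∑ k ∈ Finset.Icc 1 M,
        |((G.verts.filter fun v => k ≤ G.degree v).card : ℝ)
          - ((H.verts.filter fun v => k ≤ H.degree v).card : ℝ)| with hRdef
  -- lower bound for every bijection
  have key_ge : ∀ f : PadV G H ≃ PadV H G, R ≤ ∑ x, cdlb ce G H x (f x) := by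
    intro f
    have h1 : ∑ x, cdlb ce G H x (f x)
        = ce / 2 * ∑ x : PadV G H, |(padDeg G H x : ℝ) - (padDeg H G (f x) : ℝ)| := by
      rw [Finset.mul_sum]; rfl
    rw [h1, hRdef]
    apply mul_le_mul_of_nonneg_left _ (by linarith)
    have h2 : ∑ x : PadV G H, |(padDeg G H x : ℝ) - (padDeg H G (f x) : ℝ)|
        = ∑ k ∈ Finset.Icc 1 M, ∑ x : PadV G H,
            |(if k ≤ padDeg G H x then (1:ℝ) else 0)
              - (if k ≤ padDeg H G (f x) then 1 else 0)| := by
      rw [← Finset.sum_comm]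
      exact Finset.sum_congr rfl fun x _ => layer_cake _ _ M (hbG x) (hbH (f x))
    rw [h2]
    apply Finset.sum_le_sum
    intro k hk
    have hk1 : 1 ≤ k := (Finset.mem_Icc.mp hk).1
    have e1 : ∑ x : PadV G H, (if k ≤ padDeg H G (f x) then (1:ℝ) else 0)
        = ((H.verts.filter fun v => k ≤ H.degree v).card : ℝ) := by
      rw [Equiv.sum_comp f (fun y => if k ≤ padDeg H G y then (1:ℝ) else 0)]
      exact hsH k hk1
    calc |((G.verts.filter fun v => k ≤ G.degree v).card : ℝ)
          - ((H.verts.filter fun v => k ≤ H.degree v).card : ℝ)|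
        = |∑ x : PadV G H, ((if k ≤ padDeg G H x then (1:ℝ) else 0)
            - if k ≤ padDeg H G (f x) then 1 else 0)| := by
          rw [Finset.sum_sub_distrib, hsG k hk1, e1]
      _ ≤ _ := Finset.abs_sum_le_sum_abs _ _
  -- monotone matching achieving the bound
  set n := Fintype.card (PadV G H) with hn
  have hcard : Fintype.card (PadV H G) = n := by
    simp [hn, Fintype.card_sum, add_comm]
  obtain ⟨e₁, he₁⟩ := exists_mono_equiv (rfl : Fintype.card (PadV G H) = n) (padDeg G H)
  obtain ⟨e₂, he₂⟩ := exists_mono_equiv hcard (padDeg H G)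
  set f0 : PadV G H ≃ PadV H G := e₁.symm.trans e₂ with hf0
  have hval : ∑ x, cdlb ce G H x (f0 x) = R := by
    have h0 : ∑ x, cdlb ce G H x (f0 x) = ∑ i : Fin n, cdlb ce G H (e₁ i) (e₂ i) := by
      rw [← Equiv.sum_comp e₁ (fun x => cdlb ce G H x (f0 x))]
      exact Finset.sum_congr rfl fun i _ => by simp [hf0]
    have h1 : ∑ i : Fin n, cdlb ce G H (e₁ i) (e₂ i)
        = ce / 2 * ∑ i : Fin n, |(padDeg G H (e₁ i) : ℝ) - (padDeg H G (e₂ i) : ℝ)| := by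
      rw [Finset.mul_sum]; rfl
    have h2 : ∑ i : Fin n, |(padDeg G H (e₁ i) : ℝ) - (padDeg H G (e₂ i) : ℝ)|
        = ∑ k ∈ Finset.Icc 1 M, ∑ i : Fin n,
            |(if k ≤ padDeg G H (e₁ i) then (1:ℝ) else 0)
              - (if k ≤ padDeg H G (e₂ i) then 1 else 0)| := by
      rw [← Finset.sum_comm]
      exact Finset.sum_congr rfl fun i _ => layer_cake _ _ M (hbG (e₁ i)) (hbH (e₂ i))
    have h3 : ∀ k ∈ Finset.Icc 1 M, ∑ i : Fin n,
            |(if k ≤ padDeg G H (e₁ i) then (1:ℝ) else 0)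
              - (if k ≤ padDeg H G (e₂ i) then 1 else 0)|
        = |((G.verts.filter fun v => k ≤ G.degree v).card : ℝ)
          - ((H.verts.filter fun v => k ≤ H.degree v).card : ℝ)| := by
      intro k hk
      have hk1 : 1 ≤ k := (Finset.mem_Icc.mp hk).1
      have eG : ∑ i : Fin n, (if k ≤ padDeg G H (e₁ i) then (1:ℝ) else 0)
          = ((G.verts.filter fun v => k ≤ G.degree v).card : ℝ) := by
        rw [Equiv.sum_comp e₁ (fun x => if k ≤ padDeg G H x then (1:ℝ) else 0)]
        exact hsG k hk1
      have eH : ∑ i : Fin n, (if k ≤ padDeg H G (e₂ i) then (1:ℝ) else 0)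
          = ((H.verts.filter fun v => k ≤ H.degree v).card : ℝ) := by
        rw [Equiv.sum_comp e₂ (fun x => if k ≤ padDeg H G x then (1:ℝ) else 0)]
        exact hsH k hk1
      rw [← eG, ← eH]
      rcases compare_upper (fun i => padDeg G H (e₁ i)) (fun i => padDeg H G (e₂ i))
          he₁ he₂ k with hc | hc
      · exact ind_abs_sum _ _ hc
      · rw [abs_sub_comm, ← ind_abs_sum (fun i => k ≤ padDeg H G (e₂ i))
          (fun i => k ≤ padDeg G H (e₁ i)) hc]
        exact Finset.sum_congr rfl fun i _ => abs_sub_comm _ _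
    rw [h0, h1, h2, Finset.sum_congr rfl h3, hRdef]
  -- conclude via sInf
  show DLB ce G H = R
  unfold DLB oaCost
  have hmem : R ∈ {r | ∃ f : PadV G H ≃ PadV H G, r = ∑ x, cdlb ce G H x (f x)} :=
    ⟨f0, hval.symm⟩
  have hlb : ∀ r ∈ {r | ∃ f : PadV G H ≃ PadV H G, r = ∑ x, cdlb ce G H x (f x)}, R ≤ r := by
    rintro r ⟨f, rfl⟩; exact key_ge f
  exact le_antisymm (csInf_le ⟨R, hlb⟩ hmem) (le_csInf ⟨R, hmem⟩ hlb)
end
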